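/- Let X be a compact metric space, A ⊆ X a nonempty closed subset, P a metric space, and f : P → C(A, ℝ) a continuous map such that f(p) is 1-Lipschitz for every p ∈ P. Define the set-valued map F from P to subsets of C(X, ℝ) by F(p) = {g ∈ C(X, ℝ) : g is 1-Lipschitz and g restricted to A equals f(p)}. Then F is lower semi-continuous: for every p₀ ∈ P and every open set U ⊆ C(X, ℝ) with F(p₀) ∩ U ≠ ∅, there is a neighborhood V of p₀ in P such that F(p) ∩ U ≠ ∅ for all p ∈ V. -/

import Mathlib

open Metric

section Aux

variable {X : Type*} [MetricSpace X] {A : Set X}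

noncomputable def lowExt (h : C(A, ℝ)) (x : X) : ℝ := ⨆ a : A, (h a - dist x ↑a)
noncomputable def highExt (h : C(A, ℝ)) (x : X) : ℝ := ⨅ a : A, (h a + dist x ↑a)

lemma lowExt_bdd [CompactSpace A] (h : C(A, ℝ)) (x : X) :
    BddAbove (Set.range fun a : A => h a - dist x ↑a) := by
  refine ⟨‖h‖, ?_⟩
  rintro _ ⟨a, rfl⟩
  have h1 : ‖h a‖ ≤ ‖h‖ := h.norm_coe_le_norm a
  have h2 : h a ≤ |h a| := le_abs_self _
  have h3 : dist x ↑a ≥ 0 := dist_nonneg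
  rw [Real.norm_eq_abs] at h1
  simpa using by linarith

lemma highExt_bdd [CompactSpace A] (h : C(A, ℝ)) (x : X) :
    BddBelow (Set.range fun a : A => h a + dist x ↑a) := by
  refine ⟨-‖h‖, ?_⟩
  rintro _ ⟨a, rfl⟩
  have h1 : ‖h a‖ ≤ ‖h‖ := h.norm_coe_le_norm a
  have h2 : -|h a| ≤ h a := neg_abs_le _
  have h3 : dist x ↑a ≥ 0 := dist_nonneg
  rw [Real.norm_eq_abs] at h1
  simpa using by linarith

lemma lowExt_le_add [Nonempty A] [CompactSpace A] (h : C(A, ℝ)) (x y : X) :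
    lowExt h x ≤ lowExt h y + dist x y := by
  refine ciSup_le fun a => ?_
  have h1 : h a - dist y ↑a ≤ lowExt h y := le_ciSup (lowExt_bdd h y) a
  have h2 : dist y ↑a ≤ dist y x + dist x ↑a := dist_triangle _ _ _
  have h3 : dist y x = dist x y := dist_comm _ _
  linarith

lemma highExt_le_add [Nonempty A] [CompactSpace A] (h : C(A, ℝ)) (x y : X) :
    highExt h x ≤ highExt h y + dist x y := by
  rw [← sub_le_iff_le_add]
  refine le_ciInf fun a => ?_
  have h1 : highExt h x ≤ h a + dist x ↑a := ciInf_le (highExt_bdd h x) a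
  have h2 : dist x ↑a ≤ dist x y + dist y ↑a := dist_triangle _ _ _
  linarith

lemma lipschitz_lowExt [Nonempty A] [CompactSpace A] (h : C(A, ℝ)) :
    LipschitzWith 1 (lowExt h) :=
  LipschitzWith.of_le_add fun x y => lowExt_le_add h x y

lemma lipschitz_highExt [Nonempty A] [CompactSpace A] (h : C(A, ℝ)) :
    LipschitzWith 1 (highExt h) :=
  LipschitzWith.of_le_add fun x y => by
    have := highExt_le_add h x y
    linarith

lemma lowExt_eq [Nonempty A] [CompactSpace A] (h : C(A, ℝ)) (hl : LipschitzWith 1 h)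
    (a : A) : lowExt h (↑a) = h a := by
  refine le_antisymm (ciSup_le fun b => ?_) ?_
  · have := hl.dist_le_mul b a
    rw [Real.dist_eq, NNReal.coe_one, one_mul] at this
    have h2 : h b - h a ≤ |h b - h a| := le_abs_self _
    have h3 : dist b a = dist (↑a : X) ↑b := by
      rw [Subtype.dist_eq, dist_comm]
    linarith
  · have := le_ciSup (lowExt_bdd h (↑a)) a
    simpa [lowExt] using this

lemma highExt_eq [Nonempty A] [CompactSpace A] (h : C(A, ℝ)) (hl : LipschitzWith 1 h)
    (a : A) : highExt h (↑a) = h a := by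
  refine le_antisymm ?_ (le_ciInf fun b => ?_)
  · have := ciInf_le (highExt_bdd h (↑a)) a
    simpa [highExt] using this
  · have := hl.dist_le_mul a b
    rw [Real.dist_eq, NNReal.coe_one, one_mul] at this
    have h2 : h a - h b ≤ |h a - h b| := le_abs_self _
    have h3 : dist a b = dist (↑a : X) ↑b := Subtype.dist_eq a b
    linarith

/-- A 1-Lipschitz extension is ≥ the lower McShane extension. -/
lemma lowExt_le_of_ext [Nonempty A] [CompactSpace A] (h : C(A, ℝ)) (g : C(X, ℝ))
    (hg : LipschitzWith 1 g) (hge : ∀ a : A, g a = h a) (x : X) :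
    lowExt h x ≤ g x := by
  refine ciSup_le fun a => ?_
  have := hg.dist_le_mul (↑a) x
  rw [Real.dist_eq, NNReal.coe_one, one_mul] at this
  have h2 : g ↑a - g x ≤ |g ↑a - g x| := le_abs_self _
  have h3 : dist (↑a : X) x = dist x ↑a := dist_comm _ _
  have h4 := hge a
  linarith

lemma le_highExt_of_ext [Nonempty A] [CompactSpace A] (h : C(A, ℝ)) (g : C(X, ℝ))
    (hg : LipschitzWith 1 g) (hge : ∀ a : A, g a = h a) (x : X) :
    g x ≤ highExt h x := by
  refine le_ciInf fun a => ?_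
  have := hg.dist_le_mul x (↑a)
  rw [Real.dist_eq, NNReal.coe_one, one_mul] at this
  have h2 : g x - g ↑a ≤ |g x - g ↑a| := le_abs_self _
  have h4 := hge a
  linarith

lemma lowExt_le_lowExt_add [Nonempty A] [CompactSpace A] (h₁ h₂ : C(A, ℝ)) {δ : ℝ}
    (hδ : ∀ a : A, h₁ a ≤ h₂ a + δ) (x : X) :
    lowExt h₁ x ≤ lowExt h₂ x + δ := by
  refine ciSup_le fun a => ?_
  have h1 : h₂ a - dist x ↑a ≤ lowExt h₂ x := le_ciSup (lowExt_bdd h₂ x) a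
  have := hδ a
  linarith

lemma highExt_le_highExt_add [Nonempty A] [CompactSpace A] (h₁ h₂ : C(A, ℝ)) {δ : ℝ}
    (hδ : ∀ a : A, h₁ a ≤ h₂ a + δ) (x : X) :
    highExt h₁ x ≤ highExt h₂ x + δ := by
  rw [← sub_le_iff_le_add]
  refine le_ciInf fun a => ?_
  have h1 : highExt h₁ x ≤ h₁ a + dist x ↑a := ciInf_le (highExt_bdd h₁ x) a
  have := hδ a
  linarith

end Aux

/-- Let `X` be a compact metric space, `A ⊆ X` nonempty closed, `P` a metric space and
`f : P → C(A, ℝ)` continuous with each `f p` `1`-Lipschitz.  Then the set-valued map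
`F p = {g ∈ C(X, ℝ) : g 1-Lipschitz, g|_A = f p}` is lower semi-continuous. -/
theorem lipschitzExtensions_lowerSemicontinuous {X : Type*} [MetricSpace X]
    [CompactSpace X] (A : Set X) (hA : A.Nonempty) (hAclosed : IsClosed A)
    {P : Type*} [MetricSpace P]
    (f : P → C(A, ℝ)) (hf : Continuous f) (hlip : ∀ p : P, LipschitzWith 1 (f p)) :
    ∀ p₀ : P, ∀ U : Set C(X, ℝ), IsOpen U →
      ({g : C(X, ℝ) | LipschitzWith 1 g ∧ ∀ a : A, g a = f p₀ a} ∩ U).Nonempty →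
      ∃ V ∈ nhds p₀, ∀ p ∈ V,
        ({g : C(X, ℝ) | LipschitzWith 1 g ∧ ∀ a : A, g a = f p a} ∩ U).Nonempty := by
  haveI : Nonempty A := hA.to_subtype
  haveI : CompactSpace A := isCompact_iff_compactSpace.mp hAclosed.isCompact
  intro p₀ U hU ⟨g₀, ⟨hg₀lip, hg₀ext⟩, hg₀U⟩
  obtain ⟨ε, hε, hball⟩ := Metric.isOpen_iff.mp hU g₀ hg₀U
  refine ⟨f ⁻¹' Metric.ball (f p₀) ε, hf.continuousAt.preimage_mem_nhds
    (Metric.ball_mem_nhds _ hε), fun p hp => ?_⟩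
  have hδ : dist (f p) (f p₀) < ε := hp
  set δ : ℝ := dist (f p) (f p₀) with hδdef
  have hδ₁ : ∀ a : A, f p a ≤ f p₀ a + δ := fun a => by
    have := ContinuousMap.dist_apply_le_dist (f := f p) (g := f p₀) a
    rw [Real.dist_eq] at this
    have h2 : f p a - f p₀ a ≤ |f p a - f p₀ a| := le_abs_self _
    linarith
  have hδ₂ : ∀ a : A, f p₀ a ≤ f p a + δ := fun a => by
    have := ContinuousMap.dist_apply_le_dist (f := f p) (g := f p₀) a
    rw [Real.dist_eq] at this
    have h2 : f p₀ a - f p a ≤ |f p a - f p₀ a| := by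
      rw [abs_sub_comm]; exact le_abs_self _
    linarith
  -- the clamped function
  set gfun : X → ℝ := fun x => max (lowExt (f p) x) (min (g₀ x) (highExt (f p) x))
    with hgdef
  have hglip : LipschitzWith 1 gfun := by
    refine LipschitzWith.of_le_add fun x y => ?_
    have h1 := lowExt_le_add (f p) x y
    have h2 := highExt_le_add (f p) x y
    have h3 : g₀ x ≤ g₀ y + dist x y := by
      have := hg₀lip.dist_le_mul x y
      rw [Real.dist_eq, NNReal.coe_one, one_mul] at this
      have := le_trans (le_abs_self _) this
      linarith
    simp only [hgdef]
    have : max (lowExt (f p) x) (min (g₀ x) (highExt (f p) x)) ≤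
        max (lowExt (f p) y + dist x y)
          (min (g₀ y + dist x y) (highExt (f p) y + dist x y)) :=
      max_le_max h1 (min_le_min h3 h2)
    calc max (lowExt (f p) x) (min (g₀ x) (highExt (f p) x))
        ≤ max (lowExt (f p) y + dist x y)
          (min (g₀ y + dist x y) (highExt (f p) y + dist x y)) := this
      _ = max (lowExt (f p) y) (min (g₀ y) (highExt (f p) y)) + dist x y := by
          rw [min_add_add_right, max_add_add_right]
  set g : C(X, ℝ) := ⟨gfun, hglip.continuous⟩ with hgC
  have hgext : ∀ a : A, g a = f p a := by
    intro a
    have h1 : lowExt (f p) ↑a = f p a := lowExt_eq (f p) (hlip p) a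
    have h2 : highExt (f p) ↑a = f p a := highExt_eq (f p) (hlip p) a
    show max (lowExt (f p) ↑a) (min (g₀ ↑a) (highExt (f p) ↑a)) = f p a
    rw [h1, h2]
    rcases le_total (g₀ ↑a) (f p a) with h | h
    · rw [min_eq_left h, max_eq_left h]
    · rw [min_eq_right h, max_self]
  have hdist : ∀ x : X, |g x - g₀ x| ≤ δ := by
    intro x
    have hl₀ : lowExt (f p₀) x ≤ g₀ x := lowExt_le_of_ext (f p₀) g₀ hg₀lip hg₀ext x
    have hh₀ : g₀ x ≤ highExt (f p₀) x := le_highExt_of_ext (f p₀) g₀ hg₀lip hg₀ext x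
    have hl : lowExt (f p) x ≤ lowExt (f p₀) x + δ := lowExt_le_lowExt_add _ _ hδ₁ x
    have hh : highExt (f p₀) x ≤ highExt (f p) x + δ := highExt_le_highExt_add _ _ hδ₂ x
    have hup : g x ≤ g₀ x + δ := by
      show max (lowExt (f p) x) (min (g₀ x) (highExt (f p) x)) ≤ g₀ x + δ
      refine max_le (by linarith) ?_
      have : min (g₀ x) (highExt (f p) x) ≤ g₀ x := min_le_left _ _
      have hδ0 : (0:ℝ) ≤ δ := dist_nonneg
      linarith
    have hdown : g₀ x - δ ≤ g x := by
      show g₀ x - δ ≤ max (lowExt (f p) x) (min (g₀ x) (highExt (f p) x))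
      refine le_trans ?_ (le_max_right _ _)
      refine le_min ?_ ?_
      · have hδ0 : (0:ℝ) ≤ δ := dist_nonneg
        linarith
      · linarith
    rw [abs_sub_le_iff]
    constructor <;> linarith
  have hgU : g ∈ U := by
    apply hball
    rw [Metric.mem_ball]
    have : dist g g₀ ≤ δ := (ContinuousMap.dist_le dist_nonneg).mpr fun x => by
      rw [Real.dist_eq]; exact hdist x
    linarith
  exact ⟨g, ⟨hglip, hgext⟩, hgU⟩
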